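/- Theorem 2 (characterization of the Luce linear-in-means model): A dataset {p^N}_{N∈𝒩} is consistent with the Luce linear-in-means model if and only if it satisfies no weakly incentive compatible money pump, i.e. for every agent i ∈ 𝒜 there is no family (b^N)_{N∈𝒩_i} of vectors in ℝ^X such that (a) Σ_{N∈𝒩_i} b^N has all coordinates strictly negative, (b) b^N · p_i^N > 0 for every N ∈ 𝒩_i, and (c) for every j ≠ i, Σ_{N∈𝒩_i∩𝒩_j} b^N · (p_i^N − p_j^N) ≥ 0. -/

import Mathlib

open Finset
open scoped Classical

noncomputable section

/-- The simplex Δ(X) of probability vectors on a finite set X. -/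
def simplex (X : Type*) [Fintype X] : Set (X → ℝ) :=
  {v | (∀ x, 0 ≤ v x) ∧ (∑ x, v x) = 1}

/-- Dot product on ℝ^X. -/
def dot {X : Type*} [Fintype X] (a b : X → ℝ) : ℝ := ∑ x, a x * b x

/-- Consistency with the Luce linear-in-means model (LLM). -/
def LLMConsistent {X A : Type*} [Fintype X] [Fintype A] [DecidableEq A]
    (𝒩 : Finset (Finset A)) (p : Finset A → A → X → ℝ) : Prop :=
  ∃ (v : A → X → ℝ) (w : A → A → ℝ),
    (∀ i, v i ∈ simplex X) ∧
    (∀ i j, 0 ≤ w i j) ∧ (∀ i, 0 < w i i) ∧ (∀ i, (∑ j, w i j) = 1) ∧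
    ∀ N ∈ 𝒩, ∀ i ∈ N,
      p N i = (w i i / ∑ k ∈ N, w i k) • v i +
        ∑ j ∈ N.erase i, (w i j / ∑ k ∈ N, w i k) • p N j


set_option maxHeartbeats 1000000

section DotLemmas
variable {D : Type*} [Fintype D]

lemma dot_comm (a b : D → ℝ) : dot a b = dot b a := by
  simp [dot, mul_comm]

lemma dot_sub_left (a b y : D → ℝ) : dot (a - b) y = dot a y - dot b y := by
  simp [dot, sub_mul, Finset.sum_sub_distrib]

lemma dot_sub_right (a b y : D → ℝ) : dot y (a - b) = dot y a - dot y b := by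
  simp [dot, mul_sub, Finset.sum_sub_distrib]

lemma dot_smul_left (c : ℝ) (a y : D → ℝ) : dot (c • a) y = c * dot a y := by
  simp [dot, Finset.mul_sum, mul_assoc]

lemma dot_smul_right (c : ℝ) (a y : D → ℝ) : dot y (c • a) = c * dot y a := by
  simp [dot, Finset.mul_sum]; exact Finset.sum_congr rfl fun x _ => by ring

lemma dot_sum_left {ι : Type*} (s : Finset ι) (f : ι → D → ℝ) (y : D → ℝ) :
    dot (∑ k ∈ s, f k) y = ∑ k ∈ s, dot (f k) y := by
  simp only [dot, Finset.sum_apply, Finset.sum_mul]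
  exact Finset.sum_comm

lemma dot_self_pos {c : D → ℝ} (hc : c ≠ 0) : 0 < dot c c := by
  have ⟨x, hx⟩ := Function.ne_iff.mp hc
  refine Finset.sum_pos' (fun z _ => mul_self_nonneg _) ⟨x, Finset.mem_univ x, ?_⟩
  exact mul_self_pos.mpr hx

/-- Farkas lemma for finitely generated cones. -/
lemma farkas {ι : Type*} [DecidableEq ι] (s : Finset ι) (a : ι → D → ℝ) (c : D → ℝ) :
    (∃ μ : ι → ℝ, (∀ k, 0 ≤ μ k) ∧ c = ∑ k ∈ s, μ k • a k) ∨
    (∃ y : D → ℝ, (∀ k ∈ s, dot (a k) y ≤ 0) ∧ 0 < dot c y) := by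
  induction s using Finset.induction generalizing a c with
  | empty =>
    by_cases hc : c = 0
    · exact Or.inl ⟨0, fun _ => le_refl 0, by simp [hc]⟩
    · exact Or.inr ⟨c, by simp, dot_self_pos hc⟩
  | @insert i0 s his ih =>
    rcases ih a c with ⟨μ, hμ, hc⟩ | ⟨y, hy, hcy⟩
    · left
      refine ⟨Function.update μ i0 0, fun k => by
        rw [Function.update_apply]; split <;> [exact le_refl 0; exact hμ k], ?_⟩
      rw [Finset.sum_insert his, hc, Function.update_self, zero_smul, zero_add]
      refine Finset.sum_congr rfl fun k hk => ?_
      have hne : k ≠ i0 := fun h => his (h ▸ hk)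
      rw [Function.update_of_ne hne]
    · by_cases h0 : dot (a i0) y ≤ 0
      · right
        refine ⟨y, fun k hk => ?_, hcy⟩
        rcases Finset.mem_insert.mp hk with rfl | hk
        · exact h0
        · exact hy k hk
      · push_neg at h0
        have hd : dot (a i0) y ≠ 0 := ne_of_gt h0
        set r : (D → ℝ) → ℝ := fun u => dot u y / dot (a i0) y with hr
        rcases ih (fun k => a k - r (a k) • a i0) (c - r c • a i0) with
          ⟨μ, hμ, hc'⟩ | ⟨z, hz, hcz⟩
        · left
          set t : ℝ := r c - ∑ k ∈ s, μ k * r (a k) with ht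
          have htpos : 0 ≤ t := by
            have h1 : 0 < r c := div_pos hcy h0
            have h2 : ∀ k ∈ s, μ k * r (a k) ≤ 0 := fun k hk =>
              mul_nonpos_of_nonneg_of_nonpos (hμ k)
                (div_nonpos_of_nonpos_of_nonneg (hy k hk) (le_of_lt h0))
            have h3 : ∑ k ∈ s, μ k * r (a k) ≤ 0 := Finset.sum_nonpos h2
            linarith
          refine ⟨Function.update μ i0 t, fun k => by
            rw [Function.update_apply]; split <;> [exact htpos; exact hμ k], ?_⟩
          rw [Finset.sum_insert his, Function.update_self]
          have hsum : (∑ k ∈ s, Function.update μ i0 t k • a k)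
              = ∑ k ∈ s, μ k • a k := by
            refine Finset.sum_congr rfl fun k hk => ?_
            have hne : k ≠ i0 := fun h => his (h ▸ hk)
            rw [Function.update_of_ne hne]
          rw [hsum]
          have hexp : (∑ k ∈ s, μ k • (a k - r (a k) • a i0))
              = ∑ k ∈ s, μ k • a k - (∑ k ∈ s, μ k * r (a k)) • a i0 := by
            rw [Finset.sum_smul, ← Finset.sum_sub_distrib]
            refine Finset.sum_congr rfl fun k _ => ?_
            rw [smul_sub, smul_smul]
          have hce : c = (∑ k ∈ s, μ k • a k - (∑ k ∈ s, μ k * r (a k)) • a i0)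
              + r c • a i0 := by
            have h' := eq_add_of_sub_eq hc'
            rw [hexp] at h'
            exact h'
          rw [hce, ht, sub_smul]
          abel
        · right
          set w : D → ℝ := z - (dot (a i0) z / dot (a i0) y) • y with hw
          have key : ∀ u : D → ℝ, dot u w = dot (u - r u • a i0) z := by
            intro u
            rw [hw, dot_sub_right, dot_smul_right, dot_sub_left, dot_smul_left, hr]
            dsimp only
            ring
          refine ⟨w, fun k hk => ?_, ?_⟩
          · rcases Finset.mem_insert.mp hk with h | hk
            · rw [key (a k), h]
              have hz0 : a i0 - r (a i0) • a i0 = 0 := by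
                rw [hr]; dsimp only; rw [div_self hd, one_smul, sub_self]
              rw [hz0]; simp [dot]
            · rw [key (a k)]; exact hz k hk
          · rw [key c]; exact hcz

end DotLemmas


section Dot2
variable {D : Type*} [Fintype D]

lemma dot_add_right (a b y : D → ℝ) : dot y (a + b) = dot y a + dot y b := by
  simp [dot, mul_add, Finset.sum_add_distrib]

lemma dot_sum_right {ι : Type*} (s : Finset ι) (f : ι → D → ℝ) (y : D → ℝ) :
    dot y (∑ k ∈ s, f k) = ∑ k ∈ s, dot y (f k) := by
  simp only [dot, Finset.sum_apply, Finset.mul_sum]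
  exact Finset.sum_comm

lemma dot_add_const (f : D → ℝ) (t : ℝ) (u : D → ℝ) :
    dot (fun x => f x + t) u = dot f u + t * ∑ x, u x := by
  simp [dot, add_mul, Finset.sum_add_distrib, Finset.mul_sum]

end Dot2

set_option maxHeartbeats 1000000 in
lemma exists_good {X A : Type*} [Fintype X] [Fintype A] [DecidableEq A]
    (𝒩 : Finset (Finset A)) (p : Finset A → A → X → ℝ)
    (hp : ∀ N ∈ 𝒩, ∀ i ∈ N, p N i ∈ simplex X) (i : A)
    (hFne : (𝒩.filter (fun N => i ∈ N)).Nonempty)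
    (hno : ¬ ∃ b : Finset A → X → ℝ,
        (∀ x : X, (∑ N ∈ 𝒩.filter (fun N => i ∈ N), b N x) < 0) ∧
        (∀ N ∈ 𝒩.filter (fun N => i ∈ N), 0 < dot (b N) (p N i)) ∧
        (∀ j : A, j ≠ i →
          0 ≤ ∑ N ∈ 𝒩.filter (fun N => i ∈ N ∧ j ∈ N), dot (b N) (p N i - p N j))) :
    ∃ (vi : X → ℝ) (la : A → ℝ), vi ∈ simplex X ∧ (∀ j, 0 ≤ la j) ∧
      ∀ N ∈ 𝒩, i ∈ N → ∀ x,
        vi x = p N i x + ∑ j ∈ N.erase i, la j * (p N i x - p N j x) := by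
  classical
  set F := 𝒩.filter (fun N => i ∈ N) with hF
  have hmemF : ∀ {N : Finset A}, N ∈ F ↔ N ∈ 𝒩 ∧ i ∈ N := fun {N} => Finset.mem_filter
  -- Farkas setup
  set a : (X ⊕ A) → ({N // N ∈ F} × X) → ℝ :=
    Sum.elim (fun x q => if q.2 = x then (1:ℝ) else 0)
      (fun j q => if j ∈ (q.1 : Finset A) ∧ j ≠ i
        then p (q.1 : Finset A) j q.2 - p (q.1 : Finset A) i q.2 else 0) with ha
  set c : ({N // N ∈ F} × X) → ℝ := fun q => p (q.1 : Finset A) i q.2 with hc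
  rcases farkas Finset.univ a c with ⟨μ, hμ, hceq⟩ | ⟨y, hy, hcy⟩
  · -- primal feasible
    set vi : X → ℝ := fun x => μ (Sum.inl x) with hvi
    set la : A → ℝ := fun j => μ (Sum.inr j) with hla
    have hEq : ∀ N (hN : N ∈ F) (x : X),
        vi x = p N i x + ∑ j ∈ N.erase i, la j * (p N i x - p N j x) := by
      intro N hN x
      have happ := congrFun hceq (⟨N, hN⟩, x)
      simp only [Finset.sum_apply, Pi.smul_apply, smul_eq_mul] at happ
      rw [Fintype.sum_sum_type] at happ
      have h1 : (∑ x' : X, μ (Sum.inl x') * a (Sum.inl x') (⟨N, hN⟩, x)) = vi x := by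
        simp only [ha, Sum.elim_inl, mul_ite, mul_one, mul_zero]
        rw [Finset.sum_ite_eq Finset.univ x (fun x' => μ (Sum.inl x'))]
        simp [hvi]
      have h2 : (∑ j : A, μ (Sum.inr j) * a (Sum.inr j) (⟨N, hN⟩, x))
          = ∑ j ∈ N.erase i, la j * (p N j x - p N i x) := by
        simp only [ha, Sum.elim_inr, mul_ite, mul_zero]
        rw [Finset.sum_ite, Finset.sum_const_zero, add_zero]
        refine Finset.sum_congr ?_ fun j _ => rfl
        ext j
        simp [Finset.mem_erase, and_comm]
      rw [h1, h2] at happ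
      have hs : (∑ j ∈ N.erase i, la j * (p N i x - p N j x))
          + ∑ j ∈ N.erase i, la j * (p N j x - p N i x) = 0 := by
        rw [← Finset.sum_add_distrib]
        exact Finset.sum_eq_zero fun j _ => by ring
      have : c (⟨N, hN⟩, x) = p N i x := rfl
      rw [this] at happ
      linarith
    obtain ⟨N0, hN0⟩ := hFne
    have hN0' := hmemF.mp hN0
    refine ⟨vi, la, ⟨fun x => hμ (Sum.inl x), ?_⟩, fun j => hμ (Sum.inr j),
      fun N hN hiN x => hEq N (hmemF.mpr ⟨hN, hiN⟩) x⟩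
    -- sum of vi = 1
    calc (∑ x, vi x)
        = ∑ x, (p N0 i x + ∑ j ∈ N0.erase i, la j * (p N0 i x - p N0 j x)) :=
          Finset.sum_congr rfl fun x _ => hEq N0 hN0 x
      _ = (∑ x, p N0 i x)
          + ∑ j ∈ N0.erase i, la j * ((∑ x, p N0 i x) - ∑ x, p N0 j x) := by
          rw [Finset.sum_add_distrib]
          congr 1
          rw [Finset.sum_comm]
          exact Finset.sum_congr rfl fun j _ => by
            rw [← Finset.mul_sum, Finset.sum_sub_distrib]
      _ = 1 := by
          have hpi : (∑ x, p N0 i x) = 1 := (hp N0 hN0'.1 i hN0'.2).2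
          have hpj : ∀ j ∈ N0.erase i, (∑ x, p N0 j x) = 1 := fun j hj =>
            (hp N0 hN0'.1 j (Finset.mem_of_mem_erase hj)).2
          rw [hpi]
          rw [Finset.sum_congr rfl fun j hj => by rw [hpj j hj]]
          simp
  · -- dual: build a money pump, contradiction
    exfalso
    apply hno
    set b' : Finset A → X → ℝ := fun N x => if h : N ∈ F then y (⟨N, h⟩, x) else 0 with hb'
    have hb'val : ∀ (N) (h : N ∈ F) (x), b' N x = y (⟨N, h⟩, x) := by
      intro N h x; rw [hb']; dsimp only; rw [dif_pos h]
    -- (a-weak)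
    have haw : ∀ x : X, (∑ N ∈ F, b' N x) ≤ 0 := by
      intro x
      have := hy (Sum.inl x) (Finset.mem_univ _)
      rw [show dot (a (Sum.inl x)) y = ∑ N ∈ F, b' N x from ?_] at this
      · exact this
      · rw [dot]
        rw [Fintype.sum_prod_type]
        rw [Finset.univ_eq_attach]
        rw [← Finset.sum_attach F (fun N => b' N x)]
        refine Finset.sum_congr rfl fun M _ => ?_
        simp only [ha, Sum.elim_inl, ite_mul, one_mul, zero_mul]
        rw [Finset.sum_ite_eq' Finset.univ x (fun z => y (M, z))]
        simp [hb'val _ M.2 x]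
    -- (c-weak)
    have hjw : ∀ j : A, j ≠ i →
        0 ≤ ∑ N ∈ 𝒩.filter (fun N => i ∈ N ∧ j ∈ N), dot (b' N) (p N i - p N j) := by
      intro j hj
      have hle := hy (Sum.inr j) (Finset.mem_univ _)
      have hff : F.filter (fun N => j ∈ N) = 𝒩.filter (fun N => i ∈ N ∧ j ∈ N) := by
        rw [hF, Finset.filter_filter]
      have hstepA : dot (a (Sum.inr j)) y
          = ∑ M : {N // N ∈ F},
              (if j ∈ (M : Finset A)
                then -(dot (b' (M : Finset A)) (p (M : Finset A) i - p (M : Finset A) j))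
                else 0) := by
        rw [dot, Fintype.sum_prod_type]
        refine Finset.sum_congr rfl fun M _ => ?_
        by_cases hjM : j ∈ (M : Finset A)
        · rw [if_pos hjM]
          have : ∀ z : X, a (Sum.inr j) (M, z) * y (M, z)
              = -(b' (M : Finset A) z * (p (M : Finset A) i z - p (M : Finset A) j z)) := by
            intro z
            simp only [ha, Sum.elim_inr]
            rw [if_pos ⟨hjM, hj⟩, hb'val _ M.2 z]
            ring
          rw [Finset.sum_congr rfl fun z _ => this z, dot, ← Finset.sum_neg_distrib]
          exact Finset.sum_congr rfl fun z _ => by simp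
        · rw [if_neg hjM]
          refine Finset.sum_eq_zero fun z _ => ?_
          simp only [ha, Sum.elim_inr]
          rw [if_neg (by tauto), zero_mul]
      have hstepB : (∑ M : {N // N ∈ F},
            (if j ∈ (M : Finset A)
              then -(dot (b' (M : Finset A)) (p (M : Finset A) i - p (M : Finset A) j))
              else 0))
          = ∑ N ∈ F, (if j ∈ N then -(dot (b' N) (p N i - p N j)) else 0) := by
        rw [Finset.univ_eq_attach]
        exact Finset.sum_attach F (fun N => if j ∈ N then -(dot (b' N) (p N i - p N j)) else 0)
      have hstepC : (∑ N ∈ F, (if j ∈ N then -(dot (b' N) (p N i - p N j)) else 0))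
          = -∑ N ∈ F.filter (fun N => j ∈ N), dot (b' N) (p N i - p N j) := by
        rw [show (∑ N ∈ F.filter (fun N => j ∈ N), dot (b' N) (p N i - p N j))
            = ∑ N ∈ F, if j ∈ N then dot (b' N) (p N i - p N j) else 0 from
          Finset.sum_filter _ _, ← Finset.sum_neg_distrib]
        refine Finset.sum_congr rfl fun N _ => ?_
        split <;> simp
      rw [hstepA, hstepB, hstepC, hff] at hle
      linarith
    -- (total-weak)
    have hcw : 0 < ∑ N ∈ F, dot (b' N) (p N i) := by
      have hrw : dot c y = ∑ N ∈ F, dot (b' N) (p N i) := by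
        rw [dot, Fintype.sum_prod_type]
        have hstep : ∀ M : {N // N ∈ F},
            (∑ z : X, c (M, z) * y (M, z)) = dot (b' (M : Finset A)) (p (M : Finset A) i) := by
          intro M
          rw [dot]
          refine Finset.sum_congr rfl fun z _ => ?_
          rw [hc, hb'val _ M.2 z]
          ring
        rw [Finset.sum_congr rfl fun M _ => hstep M, Finset.univ_eq_attach]
        exact Finset.sum_attach F (fun N => dot (b' N) (p N i))
      rw [hrw] at hcy
      exact hcy
    -- strictification
    obtain ⟨T, hT⟩ : ∃ T : ℝ, T = ∑ N ∈ F, dot (b' N) (p N i) := ⟨_, rfl⟩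
    rw [← hT] at hcw
    have hn : (0:ℝ) < F.card := by
      exact_mod_cast Finset.card_pos.mpr hFne
    have hcard : (0:ℝ) < 2 * F.card := by linarith
    have hs : 0 < T / (2 * F.card) := div_pos hcw hcard
    refine ⟨fun N x => b' N x + (T / (2 * F.card) - dot (b' N) (p N i)), ?_, ?_, ?_⟩
    · -- (a): strictly negative column sums
      intro x
      have h1 : (∑ N ∈ F, (b' N x + (T / (2 * F.card) - dot (b' N) (p N i))))
          = (∑ N ∈ F, b' N x) + ∑ N ∈ F, (T / (2 * F.card) - dot (b' N) (p N i)) := by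
        rw [Finset.sum_add_distrib]
      have h2 : (∑ N ∈ F, (T / (2 * F.card) - dot (b' N) (p N i)))
          = F.card * (T / (2 * F.card)) - T := by
        rw [Finset.sum_sub_distrib, Finset.sum_const, nsmul_eq_mul, ← hT]
      have h3 : (F.card : ℝ) * (T / (2 * F.card)) = T / 2 := by
        rw [mul_div_assoc']
        rw [eq_div_iff (ne_of_gt (by linarith : (0:ℝ) < (2:ℝ)))]
        field_simp
      have := haw x
      rw [h1, h2, h3]
      have hT2 : 0 < T / 2 := by linarith
      linarith
    · -- (b): each dot positive
      intro N hN
      have hpN : (∑ x, p N i x) = 1 :=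
        (hp N (hmemF.mp hN).1 i (hmemF.mp hN).2).2
      have hd : dot (fun x => b' N x + (T / (2 * F.card) - dot (b' N) (p N i))) (p N i)
          = dot (b' N) (p N i) + (T / (2 * F.card) - dot (b' N) (p N i)) * ∑ x, p N i x :=
        dot_add_const _ _ _
      rw [hd, hpN]
      linarith
    · -- (c): pairwise sums nonneg
      intro j hj
      have key : ∀ N ∈ 𝒩.filter (fun N => i ∈ N ∧ j ∈ N),
          dot (fun x => b' N x + (T / (2 * F.card) - dot (b' N) (p N i))) (p N i - p N j)
            = dot (b' N) (p N i - p N j) := by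
        intro N hN
        obtain ⟨hN𝒩, hiN, hjN⟩ : N ∈ 𝒩 ∧ i ∈ N ∧ j ∈ N := by
          have := Finset.mem_filter.mp hN
          exact ⟨this.1, this.2.1, this.2.2⟩
        have hsum0 : (∑ x, (p N i - p N j) x) = 0 := by
          have h1 : (∑ x, p N i x) = 1 := (hp N hN𝒩 i hiN).2
          have h2 : (∑ x, p N j x) = 1 := (hp N hN𝒩 j hjN).2
          simp only [Pi.sub_apply, Finset.sum_sub_distrib, h1, h2, sub_self]
        rw [dot_add_const, hsum0, mul_zero, add_zero]
      rw [Finset.sum_congr rfl key]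
      exact hjw j hj

lemma div_div_div_cancel_right₀' (a b c : ℝ) (hc : c ≠ 0) (hb : b ≠ 0) :
    a / c / (b / c) = a / b := by
  field_simp


/-- Theorem 2: a dataset is consistent with the Luce linear-in-means model iff it admits
no weakly incentive compatible money pump. -/
theorem llm_iff_no_weakly_incentive_compatible_money_pump
    {X A : Type*} [Fintype X] [Fintype A] [DecidableEq A]
    (hX : 2 ≤ Fintype.card X) (hA : 2 ≤ Fintype.card A)
    (𝒩 : Finset (Finset A)) (h𝒩 : 𝒩.Nonempty) (h𝒩' : ∀ N ∈ 𝒩, N.Nonempty)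
    (p : Finset A → A → X → ℝ) (hp : ∀ N ∈ 𝒩, ∀ i ∈ N, p N i ∈ simplex X) :
    LLMConsistent 𝒩 p ↔
      ∀ i : A, ¬ ∃ b : Finset A → X → ℝ,
        (∀ x : X, (∑ N ∈ 𝒩.filter (fun N => i ∈ N), b N x) < 0) ∧
        (∀ N ∈ 𝒩.filter (fun N => i ∈ N), 0 < dot (b N) (p N i)) ∧
        (∀ j : A, j ≠ i →
          0 ≤ ∑ N ∈ 𝒩.filter (fun N => i ∈ N ∧ j ∈ N), dot (b N) (p N i - p N j)) := by
  classical
  constructor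
  · -- LLM consistent → no money pump
    rintro ⟨v, w, hv, hw0, hwi, hw1, heq⟩ i ⟨b, hax, hbp, hcj⟩
    have hXne : Nonempty X := Fintype.card_pos_iff.mp (by omega)
    obtain ⟨x0⟩ := hXne
    have hFne : (𝒩.filter (fun N => i ∈ N)).Nonempty := by
      rcases Finset.eq_empty_or_nonempty (𝒩.filter (fun N => i ∈ N)) with h | h
      · exfalso; have := hax x0; rw [h] at this; simp at this
      · exact h
    have hiN : ∀ N ∈ 𝒩.filter (fun N => i ∈ N), i ∈ N :=
      fun N hN => (Finset.mem_filter.mp hN).2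
    have hN𝒩 : ∀ N ∈ 𝒩.filter (fun N => i ∈ N), N ∈ 𝒩 :=
      fun N hN => (Finset.mem_filter.mp hN).1
    -- key identity for each N
    have key : ∀ N ∈ 𝒩.filter (fun N => i ∈ N),
        w i i * dot (b N) (p N i) - w i i * dot (b N) (v i)
          + ∑ j ∈ N.erase i, w i j * dot (b N) (p N i - p N j) = 0 := by
      intro N hN
      have hW : (0:ℝ) < ∑ k ∈ N, w i k := by
        have h1 : w i i ≤ ∑ k ∈ N, w i k :=
          Finset.single_le_sum (fun k _ => hw0 i k) (hiN N hN)
        linarith [hwi i]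
      have hWne : (∑ k ∈ N, w i k) ≠ 0 := ne_of_gt hW
      have hmodel := heq N (hN𝒩 N hN) i (hiN N hN)
      have hdot : dot (b N) (p N i) = (w i i / ∑ k ∈ N, w i k) * dot (b N) (v i)
          + ∑ j ∈ N.erase i, (w i j / ∑ k ∈ N, w i k) * dot (b N) (p N j) := by
        calc dot (b N) (p N i)
            = dot (b N) ((w i i / ∑ k ∈ N, w i k) • v i +
              ∑ j ∈ N.erase i, (w i j / ∑ k ∈ N, w i k) • p N j) := by rw [← hmodel]
          _ = _ := by
              rw [dot_add_right, dot_smul_right, dot_sum_right]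
              congr 1
              exact Finset.sum_congr rfl fun j _ => dot_smul_right _ _ _
      have hdot2 : (∑ k ∈ N, w i k) * dot (b N) (p N i)
          = w i i * dot (b N) (v i) + ∑ j ∈ N.erase i, w i j * dot (b N) (p N j) := by
        rw [hdot, mul_add, Finset.mul_sum]
        congr 1
        · field_simp
        · exact Finset.sum_congr rfl fun j _ => by field_simp
      have hsplit : (∑ k ∈ N, w i k) = w i i + ∑ j ∈ N.erase i, w i j :=
        (Finset.add_sum_erase N (w i) (hiN N hN)).symm
      rw [hsplit, add_mul] at hdot2
      have e1 : (∑ j ∈ N.erase i, w i j * dot (b N) (p N i - p N j))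
          = (∑ j ∈ N.erase i, w i j) * dot (b N) (p N i)
            - ∑ j ∈ N.erase i, w i j * dot (b N) (p N j) := by
        rw [Finset.sum_mul, ← Finset.sum_sub_distrib]
        refine Finset.sum_congr rfl fun j _ => ?_
        rw [dot_sub_right]
        ring
      rw [e1]
      linarith
    -- sum over N
    have hsum : ∑ N ∈ 𝒩.filter (fun N => i ∈ N),
        (w i i * dot (b N) (p N i) - w i i * dot (b N) (v i)
          + ∑ j ∈ N.erase i, w i j * dot (b N) (p N i - p N j)) = 0 := by
      rw [Finset.sum_congr rfl key, Finset.sum_const_zero]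
    rw [Finset.sum_add_distrib, Finset.sum_sub_distrib, ← Finset.mul_sum,
      ← Finset.mul_sum] at hsum
    -- the double sum is nonneg
    have hR : 0 ≤ ∑ N ∈ 𝒩.filter (fun N => i ∈ N),
        ∑ j ∈ N.erase i, w i j * dot (b N) (p N i - p N j) := by
      have hrw : ∀ N ∈ 𝒩.filter (fun N => i ∈ N),
          (∑ j ∈ N.erase i, w i j * dot (b N) (p N i - p N j))
            = ∑ j ∈ Finset.univ.erase i,
                (if j ∈ N then w i j * dot (b N) (p N i - p N j) else 0) := by
        intro N hN
        rw [Finset.sum_ite, Finset.sum_const_zero, add_zero]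
        refine Finset.sum_congr ?_ fun j _ => rfl
        ext j
        simp [Finset.mem_erase, Finset.mem_filter, and_comm]
      rw [Finset.sum_congr rfl hrw, Finset.sum_comm]
      refine Finset.sum_nonneg fun j hj => ?_
      have hjne : j ≠ i := Finset.ne_of_mem_erase hj
      have : (∑ N ∈ 𝒩.filter (fun N => i ∈ N),
            (if j ∈ N then w i j * dot (b N) (p N i - p N j) else 0))
          = w i j * ∑ N ∈ 𝒩.filter (fun N => i ∈ N ∧ j ∈ N),
              dot (b N) (p N i - p N j) := by
        rw [← Finset.filter_filter, ← Finset.sum_filter, Finset.mul_sum]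
      rw [this]
      exact mul_nonneg (hw0 i j) (hcj j hjne)
    -- positivity facts
    have hP : 0 < ∑ N ∈ 𝒩.filter (fun N => i ∈ N), dot (b N) (p N i) :=
      Finset.sum_pos hbp hFne
    have hQ : (∑ N ∈ 𝒩.filter (fun N => i ∈ N), dot (b N) (v i)) < 0 := by
      have hswap : (∑ N ∈ 𝒩.filter (fun N => i ∈ N), dot (b N) (v i))
          = ∑ x, (∑ N ∈ 𝒩.filter (fun N => i ∈ N), b N x) * v i x := by
        simp only [dot]
        rw [Finset.sum_comm]
        exact Finset.sum_congr rfl fun x _ => by rw [Finset.sum_mul]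
      rw [hswap]
      have hvx : ∃ x, 0 < v i x := by
        by_contra h
        push_neg at h
        have : (∑ x, v i x) ≤ 0 := Finset.sum_nonpos fun x _ => h x
        rw [(hv i).2] at this
        linarith
      obtain ⟨x1, hx1⟩ := hvx
      have hle : ∀ x ∈ Finset.univ, (∑ N ∈ 𝒩.filter (fun N => i ∈ N), b N x) * v i x
          ≤ (0:ℝ) :=
        fun x _ => mul_nonpos_of_nonpos_of_nonneg (le_of_lt (hax x)) ((hv i).1 x)
      have hlt : (∑ N ∈ 𝒩.filter (fun N => i ∈ N), b N x1) * v i x1 < 0 :=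
        mul_neg_of_neg_of_pos (hax x1) hx1
      calc (∑ x, (∑ N ∈ 𝒩.filter (fun N => i ∈ N), b N x) * v i x)
          < ∑ _x : X, (0:ℝ) :=
            Finset.sum_lt_sum hle ⟨x1, Finset.mem_univ x1, hlt⟩
        _ = 0 := by simp
    nlinarith [mul_pos (hwi i) hP, mul_pos (hwi i) (neg_pos.mpr hQ)]
  · -- no money pump → LLM consistent
    intro hno
    have main : ∀ i : A, ∃ (vi : X → ℝ) (la : A → ℝ), vi ∈ simplex X ∧
        (∀ j, 0 ≤ la j) ∧ ∀ N ∈ 𝒩, i ∈ N → ∀ x,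
          vi x = p N i x + ∑ j ∈ N.erase i, la j * (p N i x - p N j x) := by
      intro i
      by_cases hFne : (𝒩.filter (fun N => i ∈ N)).Nonempty
      · exact exists_good 𝒩 p hp i hFne (hno i)
      · refine ⟨fun _ => (Fintype.card X : ℝ)⁻¹, fun _ => 0,
          ⟨fun x => by positivity, ?_⟩, fun j => le_refl 0, fun N hN hiN x => ?_⟩
        · rw [Finset.sum_const, nsmul_eq_mul]
          have : (Fintype.card X : ℝ) ≠ 0 := by
            have : 0 < Fintype.card X := by omega
            exact_mod_cast ne_of_gt this
          field_simp
          rw [Finset.card_univ]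
        · exact absurd (Finset.mem_filter.mpr ⟨hN, hiN⟩) (fun h => hFne ⟨N, h⟩)
    choose v lam hsimp hlam hgood using main
    have hS : ∀ i : A, (0:ℝ) < 1 + ∑ j ∈ Finset.univ.erase i, lam i j := by
      intro i
      have : (0:ℝ) ≤ ∑ j ∈ Finset.univ.erase i, lam i j :=
        Finset.sum_nonneg fun j _ => hlam i j
      linarith
    refine ⟨v, fun i k => (if k = i then 1 else lam i k)
        / (1 + ∑ j ∈ Finset.univ.erase i, lam i j), hsimp, ?_, ?_, ?_, ?_⟩
    · -- nonneg
      intro i k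
      apply div_nonneg _ (le_of_lt (hS i))
      split
      · exact zero_le_one
      · exact hlam i k
    · -- diagonal positive
      intro i
      show 0 < (if i = i then (1:ℝ) else lam i i) / (1 + ∑ j ∈ Finset.univ.erase i, lam i j)
      rw [if_pos rfl]
      exact div_pos one_pos (hS i)
    · -- rows sum to one
      intro i
      show (∑ k, (if k = i then (1:ℝ) else lam i k)
          / (1 + ∑ j ∈ Finset.univ.erase i, lam i j)) = 1
      rw [← Finset.sum_div, div_eq_one_iff_eq (ne_of_gt (hS i)),
        ← Finset.add_sum_erase Finset.univ _ (Finset.mem_univ i), if_pos rfl]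
      congr 1
      refine Finset.sum_congr rfl fun k hk => ?_
      rw [if_neg (Finset.ne_of_mem_erase hk)]
    · -- model equation
      intro N hN i hiN
      show p N i = ((if i = i then (1:ℝ) else lam i i)
            / (1 + ∑ j ∈ Finset.univ.erase i, lam i j)
            / ∑ k ∈ N, (if k = i then (1:ℝ) else lam i k)
              / (1 + ∑ j ∈ Finset.univ.erase i, lam i j)) • v i +
          ∑ j ∈ N.erase i, ((if j = i then (1:ℝ) else lam i j)
            / (1 + ∑ j' ∈ Finset.univ.erase i, lam i j')
            / ∑ k ∈ N, (if k = i then (1:ℝ) else lam i k)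
              / (1 + ∑ j' ∈ Finset.univ.erase i, lam i j')) • p N j
      have hSne : (1 + ∑ j ∈ Finset.univ.erase i, lam i j) ≠ 0 := ne_of_gt (hS i)
      have hL : (0:ℝ) ≤ ∑ j ∈ N.erase i, lam i j :=
        Finset.sum_nonneg fun j _ => hlam i j
      have ht : (1 + ∑ j ∈ N.erase i, lam i j) ≠ 0 := ne_of_gt (by linarith)
      have hW : (∑ k ∈ N, (if k = i then (1:ℝ) else lam i k)
            / (1 + ∑ j ∈ Finset.univ.erase i, lam i j))
          = (1 + ∑ j ∈ N.erase i, lam i j)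
            / (1 + ∑ j ∈ Finset.univ.erase i, lam i j) := by
        rw [← Finset.sum_div]
        congr 1
        rw [← Finset.add_sum_erase N _ hiN, if_pos rfl]
        congr 1
        refine Finset.sum_congr rfl fun k hk => ?_
        rw [if_neg (Finset.ne_of_mem_erase hk)]
      rw [hW]
      have hcoef1 : (if i = i then (1:ℝ) else lam i i)
            / (1 + ∑ j ∈ Finset.univ.erase i, lam i j)
            / ((1 + ∑ j ∈ N.erase i, lam i j)
              / (1 + ∑ j ∈ Finset.univ.erase i, lam i j))
          = 1 / (1 + ∑ j ∈ N.erase i, lam i j) := by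
        rw [if_pos rfl]
        exact div_div_div_cancel_right₀' 1 _ _ hSne ht
      rw [hcoef1]
      have hcoef2 : ∀ j ∈ N.erase i, ((if j = i then (1:ℝ) else lam i j)
            / (1 + ∑ j ∈ Finset.univ.erase i, lam i j)
            / ((1 + ∑ j ∈ N.erase i, lam i j)
              / (1 + ∑ j ∈ Finset.univ.erase i, lam i j))) • p N j
          = (lam i j / (1 + ∑ j ∈ N.erase i, lam i j)) • p N j := by
        intro j hj
        rw [if_neg (Finset.ne_of_mem_erase hj)]
        congr 1
        exact div_div_div_cancel_right₀' (lam i j) _ _ hSne ht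
      rw [Finset.sum_congr rfl hcoef2]
      funext x
      simp only [Pi.add_apply, Pi.smul_apply, Finset.sum_apply, smul_eq_mul]
      have hv := hgood i N hN hiN x
      have hdivsum : (∑ j ∈ N.erase i, lam i j / (1 + ∑ j ∈ N.erase i, lam i j) * p N j x)
          = (∑ j ∈ N.erase i, lam i j * p N j x) / (1 + ∑ j ∈ N.erase i, lam i j) := by
        rw [Finset.sum_congr rfl fun j _ =>
          div_mul_eq_mul_div (lam i j) (1 + ∑ j ∈ N.erase i, lam i j) (p N j x),
          ← Finset.sum_div]
      rw [hdivsum, hv]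
      have hQP : (∑ j ∈ N.erase i, lam i j * (p N i x - p N j x))
            + ∑ j ∈ N.erase i, lam i j * p N j x
          = (∑ j ∈ N.erase i, lam i j) * p N i x := by
        rw [← Finset.sum_add_distrib, Finset.sum_mul]
        exact Finset.sum_congr rfl fun j _ => by ring
      have hcomb : 1 / (1 + ∑ j ∈ N.erase i, lam i j)
            * (p N i x + ∑ j ∈ N.erase i, lam i j * (p N i x - p N j x))
            + (∑ j ∈ N.erase i, lam i j * p N j x) / (1 + ∑ j ∈ N.erase i, lam i j)
          = (p N i x + ∑ j ∈ N.erase i, lam i j * (p N i x - p N j x)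
              + ∑ j ∈ N.erase i, lam i j * p N j x)
            / (1 + ∑ j ∈ N.erase i, lam i j) := by
        ring
      rw [hcomb, eq_div_iff ht]
      linear_combination -hQP
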